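/- Fix an integer d with 2 ≤ d ≤ 7. Then there exists c_d ∈ (c_g, 1] such that for every c ∈ [0, c_d): (i) the maps x ↦ i(c, x) and x ↦ j(c, x) each have a unique fixed point in (0,1), denoted a_c and b_c respectively; (ii) both maps are differentiable in x on [0,1] and their derivatives there have absolute value strictly less than 1; (iii) for every x₀ ∈ [0,1], the iterates of x ↦ i(c, x) starting from x₀ converge to a_c, and the iterates of x ↦ j(c, x) starting from x₀ converge to b_c; (iv) for every x ∈ [0,1], i(c, x) > x if and only if x < a_c, and j(c, x) > x if and only if x < b_c. -/

import Mathlib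

open Filter Topology

noncomputable def fMap (d : ℕ) (α x : ℝ) : ℝ := ((1 + α * x) / (1 + 2 * x)) ^ d

noncomputable def gMap (d : ℕ) (b x : ℝ) : ℝ :=
  b ^ d * ((1 + x + x ^ 2) / (1 + b + b * x)) ^ d

/-- `i(c,x) = f(1, f(1+c, x))`. -/
noncomputable def iMap (d : ℕ) (c x : ℝ) : ℝ := fMap d 1 (fMap d (1 + c) x)

/-- `j(c,x) = f(1+c, f(1, x))`. -/
noncomputable def jMap (d : ℕ) (c x : ℝ) : ℝ := fMap d (1 + c) (fMap d 1 x)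

open Set

lemma fMap_hasDerivAt (d : ℕ) (α x : ℝ) (hx : 0 < 1 + 2 * x) :
    HasDerivAt (fMap d α)
      ((d : ℝ) * ((1 + α * x) / (1 + 2 * x)) ^ (d - 1) * ((α - 2) / (1 + 2 * x) ^ 2)) x := by
  have h1 : HasDerivAt (fun y : ℝ => 1 + α * y) α x := by
    simpa using ((hasDerivAt_id x).const_mul α).const_add 1
  have h2 : HasDerivAt (fun y : ℝ => 1 + 2 * y) 2 x := by
    simpa using ((hasDerivAt_id x).const_mul (2 : ℝ)).const_add 1
  have hne : (1 + 2 * x) ≠ 0 := ne_of_gt hx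
  have hdiv := h1.fun_div h2 hne
  have hpow := hdiv.fun_pow d
  rw [show (α - 2) / (1 + 2 * x) ^ 2 = (α * (1 + 2 * x) - (1 + α * x) * 2) / (1 + 2 * x) ^ 2 by ring]
  exact hpow

lemma fMap_pos (d : ℕ) (α x : ℝ) (hα : 0 ≤ α) (hx : 0 ≤ x) : 0 < fMap d α x := by
  apply pow_pos
  apply div_pos
  · nlinarith
  · linarith

lemma fMap_lt_one (d : ℕ) (hd : d ≠ 0) (α x : ℝ) (hα : α < 2) (hx : 0 < x) (hα0 : 0 ≤ α) :
    fMap d α x < 1 := by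
  apply pow_lt_one₀
  · apply div_nonneg
    · nlinarith
    · linarith
  · rw [div_lt_one (by linarith)]
    nlinarith
  · exact hd

lemma fMap_le_one (d : ℕ) (α x : ℝ) (hα0 : 0 ≤ α) (hα : α ≤ 2) (hx : 0 ≤ x) :
    fMap d α x ≤ 1 := by
  apply pow_le_one₀
  · apply div_nonneg
    · nlinarith
    · linarith
  · rw [div_le_one (by linarith)]
    nlinarith

lemma fixedpt_package (F : ℝ → ℝ) (K : ℝ) (hK0 : 0 ≤ K) (hK1 : K < 1)
    (hmaps : ∀ x ∈ Icc (0:ℝ) 1, F x ∈ Ioo (0:ℝ) 1)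
    (hder : ∀ x ∈ Icc (0:ℝ) 1, ∃ D, HasDerivAt F D x ∧ |D| ≤ K) :
    ∃ a ∈ Ioo (0:ℝ) 1, F a = a ∧ (∀ y ∈ Ioo (0:ℝ) 1, F y = y → y = a) ∧
      (∀ x₀ ∈ Icc (0:ℝ) 1, Tendsto (fun k => F^[k] x₀) atTop (𝓝 a)) ∧
      (∀ x ∈ Icc (0:ℝ) 1, (x < F x ↔ x < a)) := by
  have hder' : ∀ x ∈ Icc (0:ℝ) 1, HasDerivAt F (deriv F x) x ∧ |deriv F x| ≤ K := by
    intro x hx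
    obtain ⟨D, h1, h2⟩ := hder x hx
    have hD : deriv F x = D := h1.deriv
    exact ⟨hD ▸ h1, hD ▸ h2⟩
  have hlip : ∀ p ∈ Icc (0:ℝ) 1, ∀ q ∈ Icc (0:ℝ) 1, |F p - F q| ≤ K * |p - q| := by
    intro p hp q hq
    have := Convex.norm_image_sub_le_of_norm_hasDerivWithin_le
      (f := F) (f' := fun t => deriv F t) (s := Icc (0:ℝ) 1)
      (fun t ht => ((hder' t ht).1).hasDerivWithinAt)
      (fun t ht => by simpa [Real.norm_eq_abs] using (hder' t ht).2)
      (convex_Icc 0 1) hq hp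
    simpa [Real.norm_eq_abs] using this
  have hcont : ContinuousOn F (Icc (0:ℝ) 1) := fun x hx =>
    ((hder' x hx).1).continuousAt.continuousWithinAt
  have h0 : 0 < F 0 := (hmaps 0 (by norm_num)).1
  have h1 : F 1 < 1 := (hmaps 1 (by norm_num)).2
  have hGc : ContinuousOn (fun x => F x - x) (Icc (0:ℝ) 1) := hcont.sub continuousOn_id
  have hmem : (0:ℝ) ∈ Ioo (F 1 - 1) (F 0 - 0) := ⟨by linarith, by linarith⟩
  obtain ⟨a, ha, hGa⟩ := intermediate_value_Ioo' (by norm_num : (0:ℝ) ≤ 1) hGc hmem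
  have hFa : F a = a := by
    have : F a - a = 0 := hGa
    linarith
  have haIcc : a ∈ Icc (0:ℝ) 1 := Ioo_subset_Icc_self ha
  refine ⟨a, ha, hFa, ?_, ?_, ?_⟩
  · -- uniqueness
    intro y hy hFy
    have h := hlip y (Ioo_subset_Icc_self hy) a haIcc
    rw [hFy, hFa] at h
    have h2 := abs_nonneg (y - a)
    have : |y - a| = 0 := le_antisymm (by nlinarith) h2
    have := abs_eq_zero.mp this
    linarith [this]
  · -- convergence
    intro x₀ hx₀
    have hmapsIcc : MapsTo F (Icc (0:ℝ) 1) (Icc (0:ℝ) 1) := fun x hx =>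
      Ioo_subset_Icc_self (hmaps x hx)
    have hit : ∀ k, F^[k] x₀ ∈ Icc (0:ℝ) 1 := fun k => (hmapsIcc.iterate k) hx₀
    have hbound : ∀ k, |F^[k] x₀ - a| ≤ K ^ k * |x₀ - a| := by
      intro k
      induction k with
      | zero => simp
      | succ n ih =>
        rw [Function.iterate_succ_apply']
        calc |F (F^[n] x₀) - a| = |F (F^[n] x₀) - F a| := by rw [hFa]
          _ ≤ K * |F^[n] x₀ - a| := hlip _ (hit n) a haIcc
          _ ≤ K * (K ^ n * |x₀ - a|) := mul_le_mul_of_nonneg_left ih hK0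
          _ = K ^ (n + 1) * |x₀ - a| := by ring
    have htend : Tendsto (fun k => |F^[k] x₀ - a|) atTop (𝓝 0) := by
      apply squeeze_zero (fun k => abs_nonneg _) hbound
      simpa using (tendsto_pow_atTop_nhds_zero_of_lt_one hK0 hK1).mul_const |x₀ - a|
    rw [tendsto_iff_dist_tendsto_zero]
    simpa [Real.dist_eq] using htend
  · -- order characterization
    intro x hx
    have h := hlip x hx a haIcc
    rw [hFa] at h
    constructor
    · intro hlt
      by_contra hcon
      push_neg at hcon
      rcases eq_or_lt_of_le hcon with heq | hlt2
      · rw [← heq, hFa] at hlt; exact lt_irrefl _ hlt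
      · have habs : |x - a| = x - a := abs_of_pos (by linarith)
        have := le_abs_self (F x - a)
        rw [habs] at h
        nlinarith
    · intro hlt
      have habs : |x - a| = a - x := by rw [abs_of_neg (by linarith)]; ring
      rw [habs] at h
      have := neg_abs_le (F x - a)
      nlinarith

lemma T_step (d : ℕ) (K a b u : ℝ) (ha2 : 1/2 ≤ a) (hau : a ≤ u) (hub : u ≤ b) (hK : 0 ≤ K)
    (hch : (d:ℝ)^2*(2*b-1)^2*b^(d-1)*(1+b^d)^(d-1) ≤ K*(1+2*a^d)^(d+1)) :
    (d:ℝ)^2*(2*u-1)^2*u^(d-1)*(1+u^d)^(d-1) ≤ K*(1+2*u^d)^(d+1) := by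
  have h0a : 0 ≤ a := le_trans (by norm_num) ha2
  have h0u : 0 ≤ u := le_trans h0a hau
  have h2u : 0 ≤ 2*u-1 := by linarith
  have h0b : 0 ≤ b := le_trans h0u hub
  calc (d:ℝ)^2*(2*u-1)^2*u^(d-1)*(1+u^d)^(d-1)
      ≤ (d:ℝ)^2*(2*b-1)^2*b^(d-1)*(1+b^d)^(d-1) := by
        have e1 : (2*u-1)^2 ≤ (2*b-1)^2 := pow_le_pow_left₀ h2u (by linarith) 2
        have e2 : u^(d-1) ≤ b^(d-1) := pow_le_pow_left₀ h0u hub _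
        have e3 : (1+u^d)^(d-1) ≤ (1+b^d)^(d-1) := by
          apply pow_le_pow_left₀ (by positivity)
          have := pow_le_pow_left₀ h0u hub d
          linarith
        have n1 : (0:ℝ) ≤ (d:ℝ)^2 := by positivity
        have n2 : (0:ℝ) ≤ (2*b-1)^2 := sq_nonneg _
        have n3 : (0:ℝ) ≤ b^(d-1) := by positivity
        have n4 : (0:ℝ) ≤ u^(d-1) := by positivity
        have n5 : (0:ℝ) ≤ (1+u^d)^(d-1) := by positivity
        apply mul_le_mul _ e3 n5 (by positivity)
        apply mul_le_mul _ e2 n4 (by positivity)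
        exact mul_le_mul le_rfl e1 (sq_nonneg _) n1
    _ ≤ K*(1+2*a^d)^(d+1) := hch
    _ ≤ K*(1+2*u^d)^(d+1) := by
        apply mul_le_mul_of_nonneg_left _ hK
        apply pow_le_pow_left₀ (by positivity)
        have := pow_le_pow_left₀ h0a hau d
        linarith

lemma Tbound2 : ∀ u : ℝ, 2/3 ≤ u → u ≤ 1 →
    ((0+2:ℕ):ℝ)^2*(2*u-1)^2*u^(0+1)*(1+u^(0+2))^(0+1) ≤ (31/100)*(1+2*u^(0+2))^(0+3) := by
  intro u h0 h1
  rcases le_total u (1217/1500) with hl1|hg1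
  · exact T_step 2 (31/100) (2/3) (1217/1500) u (by norm_num) h0 hl1 (by norm_num) (by norm_num)
  rcases le_total u (889/1000) with hl2|hg2
  · exact T_step 2 (31/100) (1217/1500) (889/1000) u (by norm_num) hg1 hl2 (by norm_num) (by norm_num)
  rcases le_total u (1403/1500) with hl3|hg3
  · exact T_step 2 (31/100) (889/1000) (1403/1500) u (by norm_num) hg2 hl3 (by norm_num) (by norm_num)
  rcases le_total u (1447/1500) with hl4|hg4
  · exact T_step 2 (31/100) (1403/1500) (1447/1500) u (by norm_num) hg3 hl4 (by norm_num) (by norm_num)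
  rcases le_total u (123/125) with hl5|hg5
  · exact T_step 2 (31/100) (1447/1500) (123/125) u (by norm_num) hg4 hl5 (by norm_num) (by norm_num)
  rcases le_total u (299/300) with hl6|hg6
  · exact T_step 2 (31/100) (123/125) (299/300) u (by norm_num) hg5 hl6 (by norm_num) (by norm_num)
  exact T_step 2 (31/100) (299/300) 1 u (by norm_num) hg6 h1 (by norm_num) (by norm_num)

lemma Tbound3 : ∀ u : ℝ, 2/3 ≤ u → u ≤ 1 →
    ((1+2:ℕ):ℝ)^2*(2*u-1)^2*u^(1+1)*(1+u^(1+2))^(1+1) ≤ (46/100)*(1+2*u^(1+2))^(1+3) := by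
  intro u h0 h1
  rcases le_total u (761/1000) with hl1|hg1
  · exact T_step 3 (46/100) (2/3) (761/1000) u (by norm_num) h0 hl1 (by norm_num) (by norm_num)
  rcases le_total u (49/60) with hl2|hg2
  · exact T_step 3 (46/100) (761/1000) (49/60) u (by norm_num) hg1 hl2 (by norm_num) (by norm_num)
  rcases le_total u (171/200) with hl3|hg3
  · exact T_step 3 (46/100) (49/60) (171/200) u (by norm_num) hg2 hl3 (by norm_num) (by norm_num)
  rcases le_total u (53/60) with hl4|hg4
  · exact T_step 3 (46/100) (171/200) (53/60) u (by norm_num) hg3 hl4 (by norm_num) (by norm_num)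
  rcases le_total u (679/750) with hl5|hg5
  · exact T_step 3 (46/100) (53/60) (679/750) u (by norm_num) hg4 hl5 (by norm_num) (by norm_num)
  rcases le_total u (923/1000) with hl6|hg6
  · exact T_step 3 (46/100) (679/750) (923/1000) u (by norm_num) hg5 hl6 (by norm_num) (by norm_num)
  rcases le_total u (703/750) with hl7|hg7
  · exact T_step 3 (46/100) (923/1000) (703/750) u (by norm_num) hg6 hl7 (by norm_num) (by norm_num)
  rcases le_total u (356/375) with hl8|hg8
  · exact T_step 3 (46/100) (703/750) (356/375) u (by norm_num) hg7 hl8 (by norm_num) (by norm_num)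
  rcases le_total u (1439/1500) with hl9|hg9
  · exact T_step 3 (46/100) (356/375) (1439/1500) u (by norm_num) hg8 hl9 (by norm_num) (by norm_num)
  rcases le_total u (121/125) with hl10|hg10
  · exact T_step 3 (46/100) (1439/1500) (121/125) u (by norm_num) hg9 hl10 (by norm_num) (by norm_num)
  rcases le_total u (2927/3000) with hl11|hg11
  · exact T_step 3 (46/100) (121/125) (2927/3000) u (by norm_num) hg10 hl11 (by norm_num) (by norm_num)
  rcases le_total u (2947/3000) with hl12|hg12
  · exact T_step 3 (46/100) (2927/3000) (2947/3000) u (by norm_num) hg11 hl12 (by norm_num) (by norm_num)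
  rcases le_total u (247/250) with hl13|hg13
  · exact T_step 3 (46/100) (2947/3000) (247/250) u (by norm_num) hg12 hl13 (by norm_num) (by norm_num)
  rcases le_total u (993/1000) with hl14|hg14
  · exact T_step 3 (46/100) (247/250) (993/1000) u (by norm_num) hg13 hl14 (by norm_num) (by norm_num)
  rcases le_total u (374/375) with hl15|hg15
  · exact T_step 3 (46/100) (993/1000) (374/375) u (by norm_num) hg14 hl15 (by norm_num) (by norm_num)
  exact T_step 3 (46/100) (374/375) 1 u (by norm_num) hg15 h1 (by norm_num) (by norm_num)

lemma Tbound4 : ∀ u : ℝ, 2/3 ≤ u → u ≤ 1 →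
    ((2+2:ℕ):ℝ)^2*(2*u-1)^2*u^(2+1)*(1+u^(2+2))^(2+1) ≤ (56/100)*(1+2*u^(2+2))^(2+3) := by
  intro u h0 h1
  rcases le_total u (11/15) with hl1|hg1
  · exact T_step 4 (56/100) (2/3) (11/15) u (by norm_num) h0 hl1 (by norm_num) (by norm_num)
  rcases le_total u (1159/1500) with hl2|hg2
  · exact T_step 4 (56/100) (11/15) (1159/1500) u (by norm_num) hg1 hl2 (by norm_num) (by norm_num)
  rcases le_total u (2399/3000) with hl3|hg3
  · exact T_step 4 (56/100) (1159/1500) (2399/3000) u (by norm_num) hg2 hl3 (by norm_num) (by norm_num)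
  rcases le_total u (41/50) with hl4|hg4
  · exact T_step 4 (56/100) (2399/3000) (41/50) u (by norm_num) hg3 hl4 (by norm_num) (by norm_num)
  rcases le_total u (2509/3000) with hl5|hg5
  · exact T_step 4 (56/100) (41/50) (2509/3000) u (by norm_num) hg4 hl5 (by norm_num) (by norm_num)
  rcases le_total u (17/20) with hl6|hg6
  · exact T_step 4 (56/100) (2509/3000) (17/20) u (by norm_num) hg5 hl6 (by norm_num) (by norm_num)
  rcases le_total u (323/375) with hl7|hg7
  · exact T_step 4 (56/100) (17/20) (323/375) u (by norm_num) hg6 hl7 (by norm_num) (by norm_num)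
  rcases le_total u (1307/1500) with hl8|hg8
  · exact T_step 4 (56/100) (323/375) (1307/1500) u (by norm_num) hg7 hl8 (by norm_num) (by norm_num)
  rcases le_total u (22/25) with hl9|hg9
  · exact T_step 4 (56/100) (1307/1500) (22/25) u (by norm_num) hg8 hl9 (by norm_num) (by norm_num)
  rcases le_total u (111/125) with hl10|hg10
  · exact T_step 4 (56/100) (22/25) (111/125) u (by norm_num) hg9 hl10 (by norm_num) (by norm_num)
  rcases le_total u (1343/1500) with hl11|hg11
  · exact T_step 4 (56/100) (111/125) (1343/1500) u (by norm_num) hg10 hl11 (by norm_num) (by norm_num)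
  rcases le_total u (451/500) with hl12|hg12
  · exact T_step 4 (56/100) (1343/1500) (451/500) u (by norm_num) hg11 hl12 (by norm_num) (by norm_num)
  rcases le_total u (227/250) with hl13|hg13
  · exact T_step 4 (56/100) (451/500) (227/250) u (by norm_num) hg12 hl13 (by norm_num) (by norm_num)
  rcases le_total u (2741/3000) with hl14|hg14
  · exact T_step 4 (56/100) (227/250) (2741/3000) u (by norm_num) hg13 hl14 (by norm_num) (by norm_num)
  rcases le_total u (919/1000) with hl15|hg15
  · exact T_step 4 (56/100) (2741/3000) (919/1000) u (by norm_num) hg14 hl15 (by norm_num) (by norm_num)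
  rcases le_total u (231/250) with hl16|hg16
  · exact T_step 4 (56/100) (919/1000) (231/250) u (by norm_num) hg15 hl16 (by norm_num) (by norm_num)
  rcases le_total u (929/1000) with hl17|hg17
  · exact T_step 4 (56/100) (231/250) (929/1000) u (by norm_num) hg16 hl17 (by norm_num) (by norm_num)
  rcases le_total u (2801/3000) with hl18|hg18
  · exact T_step 4 (56/100) (929/1000) (2801/3000) u (by norm_num) hg17 hl18 (by norm_num) (by norm_num)
  rcases le_total u (563/600) with hl19|hg19
  · exact T_step 4 (56/100) (2801/3000) (563/600) u (by norm_num) hg18 hl19 (by norm_num) (by norm_num)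
  rcases le_total u (707/750) with hl20|hg20
  · exact T_step 4 (56/100) (563/600) (707/750) u (by norm_num) hg19 hl20 (by norm_num) (by norm_num)
  rcases le_total u (947/1000) with hl21|hg21
  · exact T_step 4 (56/100) (707/750) (947/1000) u (by norm_num) hg20 hl21 (by norm_num) (by norm_num)
  rcases le_total u (1427/1500) with hl22|hg22
  · exact T_step 4 (56/100) (947/1000) (1427/1500) u (by norm_num) hg21 hl22 (by norm_num) (by norm_num)
  rcases le_total u (2867/3000) with hl23|hg23
  · exact T_step 4 (56/100) (1427/1500) (2867/3000) u (by norm_num) hg22 hl23 (by norm_num) (by norm_num)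
  rcases le_total u (2879/3000) with hl24|hg24
  · exact T_step 4 (56/100) (2867/3000) (2879/3000) u (by norm_num) hg23 hl24 (by norm_num) (by norm_num)
  rcases le_total u (2891/3000) with hl25|hg25
  · exact T_step 4 (56/100) (2879/3000) (2891/3000) u (by norm_num) hg24 hl25 (by norm_num) (by norm_num)
  rcases le_total u (2903/3000) with hl26|hg26
  · exact T_step 4 (56/100) (2891/3000) (2903/3000) u (by norm_num) hg25 hl26 (by norm_num) (by norm_num)
  rcases le_total u (583/600) with hl27|hg27
  · exact T_step 4 (56/100) (2903/3000) (583/600) u (by norm_num) hg26 hl27 (by norm_num) (by norm_num)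
  rcases le_total u (2927/3000) with hl28|hg28
  · exact T_step 4 (56/100) (583/600) (2927/3000) u (by norm_num) hg27 hl28 (by norm_num) (by norm_num)
  rcases le_total u (2939/3000) with hl29|hg29
  · exact T_step 4 (56/100) (2927/3000) (2939/3000) u (by norm_num) hg28 hl29 (by norm_num) (by norm_num)
  rcases le_total u (2951/3000) with hl30|hg30
  · exact T_step 4 (56/100) (2939/3000) (2951/3000) u (by norm_num) hg29 hl30 (by norm_num) (by norm_num)
  rcases le_total u (247/250) with hl31|hg31
  · exact T_step 4 (56/100) (2951/3000) (247/250) u (by norm_num) hg30 hl31 (by norm_num) (by norm_num)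
  rcases le_total u (2977/3000) with hl32|hg32
  · exact T_step 4 (56/100) (247/250) (2977/3000) u (by norm_num) hg31 hl32 (by norm_num) (by norm_num)
  rcases le_total u (299/300) with hl33|hg33
  · exact T_step 4 (56/100) (2977/3000) (299/300) u (by norm_num) hg32 hl33 (by norm_num) (by norm_num)
  exact T_step 4 (56/100) (299/300) 1 u (by norm_num) hg33 h1 (by norm_num) (by norm_num)

lemma Tbound5 : ∀ u : ℝ, 2/3 ≤ u → u ≤ 1 →
    ((3+2:ℕ):ℝ)^2*(2*u-1)^2*u^(3+1)*(1+u^(3+2))^(3+1) ≤ (66/100)*(1+2*u^(3+2))^(3+3) := by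
  intro u h0 h1
  rcases le_total u (1081/1500) with hl1|hg1
  · exact T_step 5 (66/100) (2/3) (1081/1500) u (by norm_num) h0 hl1 (by norm_num) (by norm_num)
  rcases le_total u (751/1000) with hl2|hg2
  · exact T_step 5 (66/100) (1081/1500) (751/1000) u (by norm_num) hg1 hl2 (by norm_num) (by norm_num)
  rcases le_total u (1157/1500) with hl3|hg3
  · exact T_step 5 (66/100) (751/1000) (1157/1500) u (by norm_num) hg2 hl3 (by norm_num) (by norm_num)
  rcases le_total u (2359/3000) with hl4|hg4
  · exact T_step 5 (66/100) (1157/1500) (2359/3000) u (by norm_num) hg3 hl4 (by norm_num) (by norm_num)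
  rcases le_total u (479/600) with hl5|hg5
  · exact T_step 5 (66/100) (2359/3000) (479/600) u (by norm_num) hg4 hl5 (by norm_num) (by norm_num)
  rcases le_total u (101/125) with hl6|hg6
  · exact T_step 5 (66/100) (479/600) (101/125) u (by norm_num) hg5 hl6 (by norm_num) (by norm_num)
  rcases le_total u (102/125) with hl7|hg7
  · exact T_step 5 (66/100) (101/125) (102/125) u (by norm_num) hg6 hl7 (by norm_num) (by norm_num)
  rcases le_total u (823/1000) with hl8|hg8
  · exact T_step 5 (66/100) (102/125) (823/1000) u (by norm_num) hg7 hl8 (by norm_num) (by norm_num)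
  rcases le_total u (311/375) with hl9|hg9
  · exact T_step 5 (66/100) (823/1000) (311/375) u (by norm_num) hg8 hl9 (by norm_num) (by norm_num)
  rcases le_total u (167/200) with hl10|hg10
  · exact T_step 5 (66/100) (311/375) (167/200) u (by norm_num) hg9 hl10 (by norm_num) (by norm_num)
  rcases le_total u (21/25) with hl11|hg11
  · exact T_step 5 (66/100) (167/200) (21/25) u (by norm_num) hg10 hl11 (by norm_num) (by norm_num)
  rcases le_total u (1267/1500) with hl12|hg12
  · exact T_step 5 (66/100) (21/25) (1267/1500) u (by norm_num) hg11 hl12 (by norm_num) (by norm_num)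
  rcases le_total u (849/1000) with hl13|hg13
  · exact T_step 5 (66/100) (1267/1500) (849/1000) u (by norm_num) hg12 hl13 (by norm_num) (by norm_num)
  rcases le_total u (853/1000) with hl14|hg14
  · exact T_step 5 (66/100) (849/1000) (853/1000) u (by norm_num) hg13 hl14 (by norm_num) (by norm_num)
  rcases le_total u (257/300) with hl15|hg15
  · exact T_step 5 (66/100) (853/1000) (257/300) u (by norm_num) hg14 hl15 (by norm_num) (by norm_num)
  rcases le_total u (2581/3000) with hl16|hg16
  · exact T_step 5 (66/100) (257/300) (2581/3000) u (by norm_num) hg15 hl16 (by norm_num) (by norm_num)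
  rcases le_total u (2591/3000) with hl17|hg17
  · exact T_step 5 (66/100) (2581/3000) (2591/3000) u (by norm_num) hg16 hl17 (by norm_num) (by norm_num)
  rcases le_total u (867/1000) with hl18|hg18
  · exact T_step 5 (66/100) (2591/3000) (867/1000) u (by norm_num) hg17 hl18 (by norm_num) (by norm_num)
  rcases le_total u (87/100) with hl19|hg19
  · exact T_step 5 (66/100) (867/1000) (87/100) u (by norm_num) hg18 hl19 (by norm_num) (by norm_num)
  rcases le_total u (873/1000) with hl20|hg20
  · exact T_step 5 (66/100) (87/100) (873/1000) u (by norm_num) hg19 hl20 (by norm_num) (by norm_num)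
  rcases le_total u (219/250) with hl21|hg21
  · exact T_step 5 (66/100) (873/1000) (219/250) u (by norm_num) hg20 hl21 (by norm_num) (by norm_num)
  rcases le_total u (879/1000) with hl22|hg22
  · exact T_step 5 (66/100) (219/250) (879/1000) u (by norm_num) hg21 hl22 (by norm_num) (by norm_num)
  rcases le_total u (441/500) with hl23|hg23
  · exact T_step 5 (66/100) (879/1000) (441/500) u (by norm_num) hg22 hl23 (by norm_num) (by norm_num)
  rcases le_total u (177/200) with hl24|hg24
  · exact T_step 5 (66/100) (441/500) (177/200) u (by norm_num) hg23 hl24 (by norm_num) (by norm_num)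
  rcases le_total u (111/125) with hl25|hg25
  · exact T_step 5 (66/100) (177/200) (111/125) u (by norm_num) hg24 hl25 (by norm_num) (by norm_num)
  rcases le_total u (891/1000) with hl26|hg26
  · exact T_step 5 (66/100) (111/125) (891/1000) u (by norm_num) hg25 hl26 (by norm_num) (by norm_num)
  rcases le_total u (447/500) with hl27|hg27
  · exact T_step 5 (66/100) (891/1000) (447/500) u (by norm_num) hg26 hl27 (by norm_num) (by norm_num)
  rcases le_total u (897/1000) with hl28|hg28
  · exact T_step 5 (66/100) (447/500) (897/1000) u (by norm_num) hg27 hl28 (by norm_num) (by norm_num)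
  rcases le_total u (9/10) with hl29|hg29
  · exact T_step 5 (66/100) (897/1000) (9/10) u (by norm_num) hg28 hl29 (by norm_num) (by norm_num)
  rcases le_total u (903/1000) with hl30|hg30
  · exact T_step 5 (66/100) (9/10) (903/1000) u (by norm_num) hg29 hl30 (by norm_num) (by norm_num)
  rcases le_total u (453/500) with hl31|hg31
  · exact T_step 5 (66/100) (903/1000) (453/500) u (by norm_num) hg30 hl31 (by norm_num) (by norm_num)
  rcases le_total u (909/1000) with hl32|hg32
  · exact T_step 5 (66/100) (453/500) (909/1000) u (by norm_num) hg31 hl32 (by norm_num) (by norm_num)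
  rcases le_total u (2737/3000) with hl33|hg33
  · exact T_step 5 (66/100) (909/1000) (2737/3000) u (by norm_num) hg32 hl33 (by norm_num) (by norm_num)
  rcases le_total u (2747/3000) with hl34|hg34
  · exact T_step 5 (66/100) (2737/3000) (2747/3000) u (by norm_num) hg33 hl34 (by norm_num) (by norm_num)
  rcases le_total u (919/1000) with hl35|hg35
  · exact T_step 5 (66/100) (2747/3000) (919/1000) u (by norm_num) hg34 hl35 (by norm_num) (by norm_num)
  rcases le_total u (346/375) with hl36|hg36
  · exact T_step 5 (66/100) (919/1000) (346/375) u (by norm_num) hg35 hl36 (by norm_num) (by norm_num)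
  rcases le_total u (2779/3000) with hl37|hg37
  · exact T_step 5 (66/100) (346/375) (2779/3000) u (by norm_num) hg36 hl37 (by norm_num) (by norm_num)
  rcases le_total u (2791/3000) with hl38|hg38
  · exact T_step 5 (66/100) (2779/3000) (2791/3000) u (by norm_num) hg37 hl38 (by norm_num) (by norm_num)
  rcases le_total u (2803/3000) with hl39|hg39
  · exact T_step 5 (66/100) (2791/3000) (2803/3000) u (by norm_num) hg38 hl39 (by norm_num) (by norm_num)
  rcases le_total u (352/375) with hl40|hg40
  · exact T_step 5 (66/100) (2803/3000) (352/375) u (by norm_num) hg39 hl40 (by norm_num) (by norm_num)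
  rcases le_total u (283/300) with hl41|hg41
  · exact T_step 5 (66/100) (352/375) (283/300) u (by norm_num) hg40 hl41 (by norm_num) (by norm_num)
  rcases le_total u (569/600) with hl42|hg42
  · exact T_step 5 (66/100) (283/300) (569/600) u (by norm_num) hg41 hl42 (by norm_num) (by norm_num)
  rcases le_total u (2861/3000) with hl43|hg43
  · exact T_step 5 (66/100) (569/600) (2861/3000) u (by norm_num) hg42 hl43 (by norm_num) (by norm_num)
  rcases le_total u (1439/1500) with hl44|hg44
  · exact T_step 5 (66/100) (2861/3000) (1439/1500) u (by norm_num) hg43 hl44 (by norm_num) (by norm_num)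
  rcases le_total u (362/375) with hl45|hg45
  · exact T_step 5 (66/100) (1439/1500) (362/375) u (by norm_num) hg44 hl45 (by norm_num) (by norm_num)
  rcases le_total u (243/250) with hl46|hg46
  · exact T_step 5 (66/100) (362/375) (243/250) u (by norm_num) hg45 hl46 (by norm_num) (by norm_num)
  rcases le_total u (1469/1500) with hl47|hg47
  · exact T_step 5 (66/100) (243/250) (1469/1500) u (by norm_num) hg46 hl47 (by norm_num) (by norm_num)
  rcases le_total u (1481/1500) with hl48|hg48
  · exact T_step 5 (66/100) (1469/1500) (1481/1500) u (by norm_num) hg47 hl48 (by norm_num) (by norm_num)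
  rcases le_total u (249/250) with hl49|hg49
  · exact T_step 5 (66/100) (1481/1500) (249/250) u (by norm_num) hg48 hl49 (by norm_num) (by norm_num)
  exact T_step 5 (66/100) (249/250) 1 u (by norm_num) hg49 h1 (by norm_num) (by norm_num)

lemma Tbound6 : ∀ u : ℝ, 2/3 ≤ u → u ≤ 1 →
    ((4+2:ℕ):ℝ)^2*(2*u-1)^2*u^(4+1)*(1+u^(4+2))^(4+1) ≤ (79/100)*(1+2*u^(4+2))^(4+3) := by
  intro u h0 h1
  rcases le_total u (269/375) with hl1|hg1
  · exact T_step 6 (79/100) (2/3) (269/375) u (by norm_num) h0 hl1 (by norm_num) (by norm_num)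
  rcases le_total u (2231/3000) with hl2|hg2
  · exact T_step 6 (79/100) (269/375) (2231/3000) u (by norm_num) hg1 hl2 (by norm_num) (by norm_num)
  rcases le_total u (1141/1500) with hl3|hg3
  · exact T_step 6 (79/100) (2231/3000) (1141/1500) u (by norm_num) hg2 hl3 (by norm_num) (by norm_num)
  rcases le_total u (773/1000) with hl4|hg4
  · exact T_step 6 (79/100) (1141/1500) (773/1000) u (by norm_num) hg3 hl4 (by norm_num) (by norm_num)
  rcases le_total u (2347/3000) with hl5|hg5
  · exact T_step 6 (79/100) (773/1000) (2347/3000) u (by norm_num) hg4 hl5 (by norm_num) (by norm_num)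
  rcases le_total u (79/100) with hl6|hg6
  · exact T_step 6 (79/100) (2347/3000) (79/100) u (by norm_num) hg5 hl6 (by norm_num) (by norm_num)
  rcases le_total u (2389/3000) with hl7|hg7
  · exact T_step 6 (79/100) (79/100) (2389/3000) u (by norm_num) hg6 hl7 (by norm_num) (by norm_num)
  rcases le_total u (481/600) with hl8|hg8
  · exact T_step 6 (79/100) (2389/3000) (481/600) u (by norm_num) hg7 hl8 (by norm_num) (by norm_num)
  rcases le_total u (2419/3000) with hl9|hg9
  · exact T_step 6 (79/100) (481/600) (2419/3000) u (by norm_num) hg8 hl9 (by norm_num) (by norm_num)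
  rcases le_total u (2431/3000) with hl10|hg10
  · exact T_step 6 (79/100) (2419/3000) (2431/3000) u (by norm_num) hg9 hl10 (by norm_num) (by norm_num)
  rcases le_total u (407/500) with hl11|hg11
  · exact T_step 6 (79/100) (2431/3000) (407/500) u (by norm_num) hg10 hl11 (by norm_num) (by norm_num)
  rcases le_total u (613/750) with hl12|hg12
  · exact T_step 6 (79/100) (407/500) (613/750) u (by norm_num) hg11 hl12 (by norm_num) (by norm_num)
  rcases le_total u (2461/3000) with hl13|hg13
  · exact T_step 6 (79/100) (613/750) (2461/3000) u (by norm_num) hg12 hl13 (by norm_num) (by norm_num)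
  rcases le_total u (247/300) with hl14|hg14
  · exact T_step 6 (79/100) (2461/3000) (247/300) u (by norm_num) hg13 hl14 (by norm_num) (by norm_num)
  rcases le_total u (413/500) with hl15|hg15
  · exact T_step 6 (79/100) (247/300) (413/500) u (by norm_num) hg14 hl15 (by norm_num) (by norm_num)
  rcases le_total u (497/600) with hl16|hg16
  · exact T_step 6 (79/100) (413/500) (497/600) u (by norm_num) hg15 hl16 (by norm_num) (by norm_num)
  rcases le_total u (623/750) with hl17|hg17
  · exact T_step 6 (79/100) (497/600) (623/750) u (by norm_num) hg16 hl17 (by norm_num) (by norm_num)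
  rcases le_total u (833/1000) with hl18|hg18
  · exact T_step 6 (79/100) (623/750) (833/1000) u (by norm_num) hg17 hl18 (by norm_num) (by norm_num)
  rcases le_total u (167/200) with hl19|hg19
  · exact T_step 6 (79/100) (833/1000) (167/200) u (by norm_num) hg18 hl19 (by norm_num) (by norm_num)
  rcases le_total u (837/1000) with hl20|hg20
  · exact T_step 6 (79/100) (167/200) (837/1000) u (by norm_num) hg19 hl20 (by norm_num) (by norm_num)
  rcases le_total u (839/1000) with hl21|hg21
  · exact T_step 6 (79/100) (837/1000) (839/1000) u (by norm_num) hg20 hl21 (by norm_num) (by norm_num)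
  rcases le_total u (841/1000) with hl22|hg22
  · exact T_step 6 (79/100) (839/1000) (841/1000) u (by norm_num) hg21 hl22 (by norm_num) (by norm_num)
  rcases le_total u (843/1000) with hl23|hg23
  · exact T_step 6 (79/100) (841/1000) (843/1000) u (by norm_num) hg22 hl23 (by norm_num) (by norm_num)
  rcases le_total u (169/200) with hl24|hg24
  · exact T_step 6 (79/100) (843/1000) (169/200) u (by norm_num) hg23 hl24 (by norm_num) (by norm_num)
  rcases le_total u (127/150) with hl25|hg25
  · exact T_step 6 (79/100) (169/200) (127/150) u (by norm_num) hg24 hl25 (by norm_num) (by norm_num)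
  rcases le_total u (509/600) with hl26|hg26
  · exact T_step 6 (79/100) (127/150) (509/600) u (by norm_num) hg25 hl26 (by norm_num) (by norm_num)
  rcases le_total u (17/20) with hl27|hg27
  · exact T_step 6 (79/100) (509/600) (17/20) u (by norm_num) hg26 hl27 (by norm_num) (by norm_num)
  rcases le_total u (511/600) with hl28|hg28
  · exact T_step 6 (79/100) (17/20) (511/600) u (by norm_num) hg27 hl28 (by norm_num) (by norm_num)
  rcases le_total u (64/75) with hl29|hg29
  · exact T_step 6 (79/100) (511/600) (64/75) u (by norm_num) hg28 hl29 (by norm_num) (by norm_num)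
  rcases le_total u (171/200) with hl30|hg30
  · exact T_step 6 (79/100) (64/75) (171/200) u (by norm_num) hg29 hl30 (by norm_num) (by norm_num)
  rcases le_total u (257/300) with hl31|hg31
  · exact T_step 6 (79/100) (171/200) (257/300) u (by norm_num) hg30 hl31 (by norm_num) (by norm_num)
  rcases le_total u (103/120) with hl32|hg32
  · exact T_step 6 (79/100) (257/300) (103/120) u (by norm_num) hg31 hl32 (by norm_num) (by norm_num)
  rcases le_total u (43/50) with hl33|hg33
  · exact T_step 6 (79/100) (103/120) (43/50) u (by norm_num) hg32 hl33 (by norm_num) (by norm_num)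
  rcases le_total u (431/500) with hl34|hg34
  · exact T_step 6 (79/100) (43/50) (431/500) u (by norm_num) hg33 hl34 (by norm_num) (by norm_num)
  rcases le_total u (108/125) with hl35|hg35
  · exact T_step 6 (79/100) (431/500) (108/125) u (by norm_num) hg34 hl35 (by norm_num) (by norm_num)
  rcases le_total u (433/500) with hl36|hg36
  · exact T_step 6 (79/100) (108/125) (433/500) u (by norm_num) hg35 hl36 (by norm_num) (by norm_num)
  rcases le_total u (217/250) with hl37|hg37
  · exact T_step 6 (79/100) (433/500) (217/250) u (by norm_num) hg36 hl37 (by norm_num) (by norm_num)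
  rcases le_total u (87/100) with hl38|hg38
  · exact T_step 6 (79/100) (217/250) (87/100) u (by norm_num) hg37 hl38 (by norm_num) (by norm_num)
  rcases le_total u (109/125) with hl39|hg39
  · exact T_step 6 (79/100) (87/100) (109/125) u (by norm_num) hg38 hl39 (by norm_num) (by norm_num)
  rcases le_total u (2623/3000) with hl40|hg40
  · exact T_step 6 (79/100) (109/125) (2623/3000) u (by norm_num) hg39 hl40 (by norm_num) (by norm_num)
  rcases le_total u (263/300) with hl41|hg41
  · exact T_step 6 (79/100) (2623/3000) (263/300) u (by norm_num) hg40 hl41 (by norm_num) (by norm_num)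
  rcases le_total u (879/1000) with hl42|hg42
  · exact T_step 6 (79/100) (263/300) (879/1000) u (by norm_num) hg41 hl42 (by norm_num) (by norm_num)
  rcases le_total u (529/600) with hl43|hg43
  · exact T_step 6 (79/100) (879/1000) (529/600) u (by norm_num) hg42 hl43 (by norm_num) (by norm_num)
  rcases le_total u (2653/3000) with hl44|hg44
  · exact T_step 6 (79/100) (529/600) (2653/3000) u (by norm_num) hg43 hl44 (by norm_num) (by norm_num)
  rcases le_total u (887/1000) with hl45|hg45
  · exact T_step 6 (79/100) (2653/3000) (887/1000) u (by norm_num) hg44 hl45 (by norm_num) (by norm_num)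
  rcases le_total u (89/100) with hl46|hg46
  · exact T_step 6 (79/100) (887/1000) (89/100) u (by norm_num) hg45 hl46 (by norm_num) (by norm_num)
  rcases le_total u (67/75) with hl47|hg47
  · exact T_step 6 (79/100) (89/100) (67/75) u (by norm_num) hg46 hl47 (by norm_num) (by norm_num)
  rcases le_total u (269/300) with hl48|hg48
  · exact T_step 6 (79/100) (67/75) (269/300) u (by norm_num) hg47 hl48 (by norm_num) (by norm_num)
  rcases le_total u (2701/3000) with hl49|hg49
  · exact T_step 6 (79/100) (269/300) (2701/3000) u (by norm_num) hg48 hl49 (by norm_num) (by norm_num)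
  rcases le_total u (2713/3000) with hl50|hg50
  · exact T_step 6 (79/100) (2701/3000) (2713/3000) u (by norm_num) hg49 hl50 (by norm_num) (by norm_num)
  rcases le_total u (1363/1500) with hl51|hg51
  · exact T_step 6 (79/100) (2713/3000) (1363/1500) u (by norm_num) hg50 hl51 (by norm_num) (by norm_num)
  rcases le_total u (137/150) with hl52|hg52
  · exact T_step 6 (79/100) (1363/1500) (137/150) u (by norm_num) hg51 hl52 (by norm_num) (by norm_num)
  rcases le_total u (689/750) with hl53|hg53
  · exact T_step 6 (79/100) (137/150) (689/750) u (by norm_num) hg52 hl53 (by norm_num) (by norm_num)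
  rcases le_total u (2773/3000) with hl54|hg54
  · exact T_step 6 (79/100) (689/750) (2773/3000) u (by norm_num) hg53 hl54 (by norm_num) (by norm_num)
  rcases le_total u (349/375) with hl55|hg55
  · exact T_step 6 (79/100) (2773/3000) (349/375) u (by norm_num) hg54 hl55 (by norm_num) (by norm_num)
  rcases le_total u (2813/3000) with hl56|hg56
  · exact T_step 6 (79/100) (349/375) (2813/3000) u (by norm_num) hg55 hl56 (by norm_num) (by norm_num)
  rcases le_total u (2837/3000) with hl57|hg57
  · exact T_step 6 (79/100) (2813/3000) (2837/3000) u (by norm_num) hg56 hl57 (by norm_num) (by norm_num)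
  rcases le_total u (358/375) with hl58|hg58
  · exact T_step 6 (79/100) (2837/3000) (358/375) u (by norm_num) hg57 hl58 (by norm_num) (by norm_num)
  rcases le_total u (1447/1500) with hl59|hg59
  · exact T_step 6 (79/100) (358/375) (1447/1500) u (by norm_num) hg58 hl59 (by norm_num) (by norm_num)
  rcases le_total u (122/125) with hl60|hg60
  · exact T_step 6 (79/100) (1447/1500) (122/125) u (by norm_num) hg59 hl60 (by norm_num) (by norm_num)
  rcases le_total u (989/1000) with hl61|hg61
  · exact T_step 6 (79/100) (122/125) (989/1000) u (by norm_num) hg60 hl61 (by norm_num) (by norm_num)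
  exact T_step 6 (79/100) (989/1000) 1 u (by norm_num) hg61 h1 (by norm_num) (by norm_num)

lemma Tbound7 : ∀ u : ℝ, 2/3 ≤ u → u ≤ 1 →
    ((5+2:ℕ):ℝ)^2*(2*u-1)^2*u^(5+1)*(1+u^(5+2))^(5+1) ≤ (94/100)*(1+2*u^(5+2))^(5+3) := by
  intro u h0 h1
  rcases le_total u (539/750) with hl1|hg1
  · exact T_step 7 (94/100) (2/3) (539/750) u (by norm_num) h0 hl1 (by norm_num) (by norm_num)
  rcases le_total u (223/300) with hl2|hg2
  · exact T_step 7 (94/100) (539/750) (223/300) u (by norm_num) hg1 hl2 (by norm_num) (by norm_num)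
  rcases le_total u (569/750) with hl3|hg3
  · exact T_step 7 (94/100) (223/300) (569/750) u (by norm_num) hg2 hl3 (by norm_num) (by norm_num)
  rcases le_total u (577/750) with hl4|hg4
  · exact T_step 7 (94/100) (569/750) (577/750) u (by norm_num) hg3 hl4 (by norm_num) (by norm_num)
  rcases le_total u (583/750) with hl5|hg5
  · exact T_step 7 (94/100) (577/750) (583/750) u (by norm_num) hg4 hl5 (by norm_num) (by norm_num)
  rcases le_total u (2351/3000) with hl6|hg6
  · exact T_step 7 (94/100) (583/750) (2351/3000) u (by norm_num) hg5 hl6 (by norm_num) (by norm_num)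
  rcases le_total u (1183/1500) with hl7|hg7
  · exact T_step 7 (94/100) (2351/3000) (1183/1500) u (by norm_num) hg6 hl7 (by norm_num) (by norm_num)
  rcases le_total u (793/1000) with hl8|hg8
  · exact T_step 7 (94/100) (1183/1500) (793/1000) u (by norm_num) hg7 hl8 (by norm_num) (by norm_num)
  rcases le_total u (239/300) with hl9|hg9
  · exact T_step 7 (94/100) (793/1000) (239/300) u (by norm_num) hg8 hl9 (by norm_num) (by norm_num)
  rcases le_total u (2399/3000) with hl10|hg10
  · exact T_step 7 (94/100) (239/300) (2399/3000) u (by norm_num) hg9 hl10 (by norm_num) (by norm_num)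
  rcases le_total u (2407/3000) with hl11|hg11
  · exact T_step 7 (94/100) (2399/3000) (2407/3000) u (by norm_num) hg10 hl11 (by norm_num) (by norm_num)
  rcases le_total u (1207/1500) with hl12|hg12
  · exact T_step 7 (94/100) (2407/3000) (1207/1500) u (by norm_num) hg11 hl12 (by norm_num) (by norm_num)
  rcases le_total u (807/1000) with hl13|hg13
  · exact T_step 7 (94/100) (1207/1500) (807/1000) u (by norm_num) hg12 hl13 (by norm_num) (by norm_num)
  rcases le_total u (809/1000) with hl14|hg14
  · exact T_step 7 (94/100) (807/1000) (809/1000) u (by norm_num) hg13 hl14 (by norm_num) (by norm_num)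
  rcases le_total u (304/375) with hl15|hg15
  · exact T_step 7 (94/100) (809/1000) (304/375) u (by norm_num) hg14 hl15 (by norm_num) (by norm_num)
  rcases le_total u (2437/3000) with hl16|hg16
  · exact T_step 7 (94/100) (304/375) (2437/3000) u (by norm_num) hg15 hl16 (by norm_num) (by norm_num)
  rcases le_total u (407/500) with hl17|hg17
  · exact T_step 7 (94/100) (2437/3000) (407/500) u (by norm_num) hg16 hl17 (by norm_num) (by norm_num)
  rcases le_total u (1223/1500) with hl18|hg18
  · exact T_step 7 (94/100) (407/500) (1223/1500) u (by norm_num) hg17 hl18 (by norm_num) (by norm_num)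
  rcases le_total u (49/60) with hl19|hg19
  · exact T_step 7 (94/100) (1223/1500) (49/60) u (by norm_num) hg18 hl19 (by norm_num) (by norm_num)
  rcases le_total u (409/500) with hl20|hg20
  · exact T_step 7 (94/100) (49/60) (409/500) u (by norm_num) hg19 hl20 (by norm_num) (by norm_num)
  rcases le_total u (1229/1500) with hl21|hg21
  · exact T_step 7 (94/100) (409/500) (1229/1500) u (by norm_num) hg20 hl21 (by norm_num) (by norm_num)
  rcases le_total u (2461/3000) with hl22|hg22
  · exact T_step 7 (94/100) (1229/1500) (2461/3000) u (by norm_num) hg21 hl22 (by norm_num) (by norm_num)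
  rcases le_total u (308/375) with hl23|hg23
  · exact T_step 7 (94/100) (2461/3000) (308/375) u (by norm_num) hg22 hl23 (by norm_num) (by norm_num)
  rcases le_total u (2467/3000) with hl24|hg24
  · exact T_step 7 (94/100) (308/375) (2467/3000) u (by norm_num) hg23 hl24 (by norm_num) (by norm_num)
  rcases le_total u (247/300) with hl25|hg25
  · exact T_step 7 (94/100) (2467/3000) (247/300) u (by norm_num) hg24 hl25 (by norm_num) (by norm_num)
  rcases le_total u (2473/3000) with hl26|hg26
  · exact T_step 7 (94/100) (247/300) (2473/3000) u (by norm_num) hg25 hl26 (by norm_num) (by norm_num)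
  rcases le_total u (619/750) with hl27|hg27
  · exact T_step 7 (94/100) (2473/3000) (619/750) u (by norm_num) hg26 hl27 (by norm_num) (by norm_num)
  rcases le_total u (2479/3000) with hl28|hg28
  · exact T_step 7 (94/100) (619/750) (2479/3000) u (by norm_num) hg27 hl28 (by norm_num) (by norm_num)
  rcases le_total u (1241/1500) with hl29|hg29
  · exact T_step 7 (94/100) (2479/3000) (1241/1500) u (by norm_num) hg28 hl29 (by norm_num) (by norm_num)
  rcases le_total u (497/600) with hl30|hg30
  · exact T_step 7 (94/100) (1241/1500) (497/600) u (by norm_num) hg29 hl30 (by norm_num) (by norm_num)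
  rcases le_total u (829/1000) with hl31|hg31
  · exact T_step 7 (94/100) (497/600) (829/1000) u (by norm_num) hg30 hl31 (by norm_num) (by norm_num)
  rcases le_total u (2489/3000) with hl32|hg32
  · exact T_step 7 (94/100) (829/1000) (2489/3000) u (by norm_num) hg31 hl32 (by norm_num) (by norm_num)
  rcases le_total u (2491/3000) with hl33|hg33
  · exact T_step 7 (94/100) (2489/3000) (2491/3000) u (by norm_num) hg32 hl33 (by norm_num) (by norm_num)
  rcases le_total u (831/1000) with hl34|hg34
  · exact T_step 7 (94/100) (2491/3000) (831/1000) u (by norm_num) hg33 hl34 (by norm_num) (by norm_num)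
  rcases le_total u (499/600) with hl35|hg35
  · exact T_step 7 (94/100) (831/1000) (499/600) u (by norm_num) hg34 hl35 (by norm_num) (by norm_num)
  rcases le_total u (2497/3000) with hl36|hg36
  · exact T_step 7 (94/100) (499/600) (2497/3000) u (by norm_num) hg35 hl36 (by norm_num) (by norm_num)
  rcases le_total u (833/1000) with hl37|hg37
  · exact T_step 7 (94/100) (2497/3000) (833/1000) u (by norm_num) hg36 hl37 (by norm_num) (by norm_num)
  rcases le_total u (2501/3000) with hl38|hg38
  · exact T_step 7 (94/100) (833/1000) (2501/3000) u (by norm_num) hg37 hl38 (by norm_num) (by norm_num)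
  rcases le_total u (2503/3000) with hl39|hg39
  · exact T_step 7 (94/100) (2501/3000) (2503/3000) u (by norm_num) hg38 hl39 (by norm_num) (by norm_num)
  rcases le_total u (167/200) with hl40|hg40
  · exact T_step 7 (94/100) (2503/3000) (167/200) u (by norm_num) hg39 hl40 (by norm_num) (by norm_num)
  rcases le_total u (2507/3000) with hl41|hg41
  · exact T_step 7 (94/100) (167/200) (2507/3000) u (by norm_num) hg40 hl41 (by norm_num) (by norm_num)
  rcases le_total u (2509/3000) with hl42|hg42
  · exact T_step 7 (94/100) (2507/3000) (2509/3000) u (by norm_num) hg41 hl42 (by norm_num) (by norm_num)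
  rcases le_total u (837/1000) with hl43|hg43
  · exact T_step 7 (94/100) (2509/3000) (837/1000) u (by norm_num) hg42 hl43 (by norm_num) (by norm_num)
  rcases le_total u (2513/3000) with hl44|hg44
  · exact T_step 7 (94/100) (837/1000) (2513/3000) u (by norm_num) hg43 hl44 (by norm_num) (by norm_num)
  rcases le_total u (503/600) with hl45|hg45
  · exact T_step 7 (94/100) (2513/3000) (503/600) u (by norm_num) hg44 hl45 (by norm_num) (by norm_num)
  rcases le_total u (839/1000) with hl46|hg46
  · exact T_step 7 (94/100) (503/600) (839/1000) u (by norm_num) hg45 hl46 (by norm_num) (by norm_num)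
  rcases le_total u (2519/3000) with hl47|hg47
  · exact T_step 7 (94/100) (839/1000) (2519/3000) u (by norm_num) hg46 hl47 (by norm_num) (by norm_num)
  rcases le_total u (2521/3000) with hl48|hg48
  · exact T_step 7 (94/100) (2519/3000) (2521/3000) u (by norm_num) hg47 hl48 (by norm_num) (by norm_num)
  rcases le_total u (841/1000) with hl49|hg49
  · exact T_step 7 (94/100) (2521/3000) (841/1000) u (by norm_num) hg48 hl49 (by norm_num) (by norm_num)
  rcases le_total u (101/120) with hl50|hg50
  · exact T_step 7 (94/100) (841/1000) (101/120) u (by norm_num) hg49 hl50 (by norm_num) (by norm_num)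
  rcases le_total u (2527/3000) with hl51|hg51
  · exact T_step 7 (94/100) (101/120) (2527/3000) u (by norm_num) hg50 hl51 (by norm_num) (by norm_num)
  rcases le_total u (843/1000) with hl52|hg52
  · exact T_step 7 (94/100) (2527/3000) (843/1000) u (by norm_num) hg51 hl52 (by norm_num) (by norm_num)
  rcases le_total u (2531/3000) with hl53|hg53
  · exact T_step 7 (94/100) (843/1000) (2531/3000) u (by norm_num) hg52 hl53 (by norm_num) (by norm_num)
  rcases le_total u (1267/1500) with hl54|hg54
  · exact T_step 7 (94/100) (2531/3000) (1267/1500) u (by norm_num) hg53 hl54 (by norm_num) (by norm_num)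
  rcases le_total u (2537/3000) with hl55|hg55
  · exact T_step 7 (94/100) (1267/1500) (2537/3000) u (by norm_num) hg54 hl55 (by norm_num) (by norm_num)
  rcases le_total u (127/150) with hl56|hg56
  · exact T_step 7 (94/100) (2537/3000) (127/150) u (by norm_num) hg55 hl56 (by norm_num) (by norm_num)
  rcases le_total u (2543/3000) with hl57|hg57
  · exact T_step 7 (94/100) (127/150) (2543/3000) u (by norm_num) hg56 hl57 (by norm_num) (by norm_num)
  rcases le_total u (1273/1500) with hl58|hg58
  · exact T_step 7 (94/100) (2543/3000) (1273/1500) u (by norm_num) hg57 hl58 (by norm_num) (by norm_num)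
  rcases le_total u (2549/3000) with hl59|hg59
  · exact T_step 7 (94/100) (1273/1500) (2549/3000) u (by norm_num) hg58 hl59 (by norm_num) (by norm_num)
  rcases le_total u (319/375) with hl60|hg60
  · exact T_step 7 (94/100) (2549/3000) (319/375) u (by norm_num) hg59 hl60 (by norm_num) (by norm_num)
  rcases le_total u (511/600) with hl61|hg61
  · exact T_step 7 (94/100) (319/375) (511/600) u (by norm_num) hg60 hl61 (by norm_num) (by norm_num)
  rcases le_total u (1279/1500) with hl62|hg62
  · exact T_step 7 (94/100) (511/600) (1279/1500) u (by norm_num) hg61 hl62 (by norm_num) (by norm_num)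
  rcases le_total u (2561/3000) with hl63|hg63
  · exact T_step 7 (94/100) (1279/1500) (2561/3000) u (by norm_num) hg62 hl63 (by norm_num) (by norm_num)
  rcases le_total u (171/200) with hl64|hg64
  · exact T_step 7 (94/100) (2561/3000) (171/200) u (by norm_num) hg63 hl64 (by norm_num) (by norm_num)
  rcases le_total u (2569/3000) with hl65|hg65
  · exact T_step 7 (94/100) (171/200) (2569/3000) u (by norm_num) hg64 hl65 (by norm_num) (by norm_num)
  rcases le_total u (2573/3000) with hl66|hg66
  · exact T_step 7 (94/100) (2569/3000) (2573/3000) u (by norm_num) hg65 hl66 (by norm_num) (by norm_num)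
  rcases le_total u (859/1000) with hl67|hg67
  · exact T_step 7 (94/100) (2573/3000) (859/1000) u (by norm_num) hg66 hl67 (by norm_num) (by norm_num)
  rcases le_total u (2581/3000) with hl68|hg68
  · exact T_step 7 (94/100) (859/1000) (2581/3000) u (by norm_num) hg67 hl68 (by norm_num) (by norm_num)
  rcases le_total u (431/500) with hl69|hg69
  · exact T_step 7 (94/100) (2581/3000) (431/500) u (by norm_num) hg68 hl69 (by norm_num) (by norm_num)
  rcases le_total u (2591/3000) with hl70|hg70
  · exact T_step 7 (94/100) (431/500) (2591/3000) u (by norm_num) hg69 hl70 (by norm_num) (by norm_num)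
  rcases le_total u (649/750) with hl71|hg71
  · exact T_step 7 (94/100) (2591/3000) (649/750) u (by norm_num) hg70 hl71 (by norm_num) (by norm_num)
  rcases le_total u (1301/1500) with hl72|hg72
  · exact T_step 7 (94/100) (649/750) (1301/1500) u (by norm_num) hg71 hl72 (by norm_num) (by norm_num)
  rcases le_total u (326/375) with hl73|hg73
  · exact T_step 7 (94/100) (1301/1500) (326/375) u (by norm_num) hg72 hl73 (by norm_num) (by norm_num)
  rcases le_total u (523/600) with hl74|hg74
  · exact T_step 7 (94/100) (326/375) (523/600) u (by norm_num) hg73 hl74 (by norm_num) (by norm_num)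
  rcases le_total u (437/500) with hl75|hg75
  · exact T_step 7 (94/100) (523/600) (437/500) u (by norm_num) hg74 hl75 (by norm_num) (by norm_num)
  rcases le_total u (263/300) with hl76|hg76
  · exact T_step 7 (94/100) (437/500) (263/300) u (by norm_num) hg75 hl76 (by norm_num) (by norm_num)
  rcases le_total u (1319/1500) with hl77|hg77
  · exact T_step 7 (94/100) (263/300) (1319/1500) u (by norm_num) hg76 hl77 (by norm_num) (by norm_num)
  rcases le_total u (2647/3000) with hl78|hg78
  · exact T_step 7 (94/100) (1319/1500) (2647/3000) u (by norm_num) hg77 hl78 (by norm_num) (by norm_num)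
  rcases le_total u (2657/3000) with hl79|hg79
  · exact T_step 7 (94/100) (2647/3000) (2657/3000) u (by norm_num) hg78 hl79 (by norm_num) (by norm_num)
  rcases le_total u (667/750) with hl80|hg80
  · exact T_step 7 (94/100) (2657/3000) (667/750) u (by norm_num) hg79 hl80 (by norm_num) (by norm_num)
  rcases le_total u (67/75) with hl81|hg81
  · exact T_step 7 (94/100) (667/750) (67/75) u (by norm_num) hg80 hl81 (by norm_num) (by norm_num)
  rcases le_total u (449/500) with hl82|hg82
  · exact T_step 7 (94/100) (67/75) (449/500) u (by norm_num) hg81 hl82 (by norm_num) (by norm_num)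
  rcases le_total u (903/1000) with hl83|hg83
  · exact T_step 7 (94/100) (449/500) (903/1000) u (by norm_num) hg82 hl83 (by norm_num) (by norm_num)
  rcases le_total u (1363/1500) with hl84|hg84
  · exact T_step 7 (94/100) (903/1000) (1363/1500) u (by norm_num) hg83 hl84 (by norm_num) (by norm_num)
  rcases le_total u (1373/1500) with hl85|hg85
  · exact T_step 7 (94/100) (1363/1500) (1373/1500) u (by norm_num) hg84 hl85 (by norm_num) (by norm_num)
  rcases le_total u (346/375) with hl86|hg86
  · exact T_step 7 (94/100) (1373/1500) (346/375) u (by norm_num) hg85 hl86 (by norm_num) (by norm_num)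
  rcases le_total u (1397/1500) with hl87|hg87
  · exact T_step 7 (94/100) (346/375) (1397/1500) u (by norm_num) hg86 hl87 (by norm_num) (by norm_num)
  rcases le_total u (353/375) with hl88|hg88
  · exact T_step 7 (94/100) (1397/1500) (353/375) u (by norm_num) hg87 hl88 (by norm_num) (by norm_num)
  rcases le_total u (1429/1500) with hl89|hg89
  · exact T_step 7 (94/100) (353/375) (1429/1500) u (by norm_num) hg88 hl89 (by norm_num) (by norm_num)
  rcases le_total u (483/500) with hl90|hg90
  · exact T_step 7 (94/100) (1429/1500) (483/500) u (by norm_num) hg89 hl90 (by norm_num) (by norm_num)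
  rcases le_total u (589/600) with hl91|hg91
  · exact T_step 7 (94/100) (483/500) (589/600) u (by norm_num) hg90 hl91 (by norm_num) (by norm_num)
  exact T_step 7 (94/100) (589/600) 1 u (by norm_num) hg91 h1 (by norm_num) (by norm_num)

lemma iMap_deriv_bound (e : ℕ) (Kt : ℝ)
    (hT : ∀ u : ℝ, 2/3 ≤ u → u ≤ 1 →
      ((e+2:ℕ):ℝ)^2*(2*u-1)^2*u^(e+1)*(1+u^(e+2))^(e+1) ≤ Kt*(1+2*u^(e+2))^(e+3))
    (c : ℝ) (hc0 : 0 ≤ c) (hc1 : c ≤ 1/2) (x : ℝ) (hx0 : 0 ≤ x) (hx1 : x ≤ 1) :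
    ∃ D, HasDerivAt (iMap (e+2) c) D x ∧ |D| ≤ Kt := by
  set d : ℕ := e + 2 with hd
  have hbx : 0 < 1 + 2*x := by linarith
  set u : ℝ := (1 + (1+c)*x)/(1+2*x) with hu
  have hu23 : 2/3 ≤ u := by
    rw [hu, le_div_iff₀ hbx]; nlinarith
  have hu1 : u ≤ 1 := by
    rw [hu, div_le_one hbx]; nlinarith
  have hu0 : 0 < u := lt_of_lt_of_le (by norm_num) hu23
  have hyeq : fMap d (1+c) x = u^d := rfl
  set y : ℝ := u^d with hy
  have hy0 : 0 < y := pow_pos hu0 d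
  have hy1 : y ≤ 1 := pow_le_one₀ hu0.le hu1
  have hby : 0 < 1 + 2*y := by linarith
  have hin : HasDerivAt (fMap d (1+c))
      ((d : ℝ) * u ^ (d-1) * ((1+c-2)/(1+2*x)^2)) x := fMap_hasDerivAt d (1+c) x hbx
  have hout : HasDerivAt (fMap d 1)
      ((d : ℝ) * ((1+1*y)/(1+2*y)) ^ (d-1) * ((1-2)/(1+2*y)^2)) y := fMap_hasDerivAt d 1 y hby
  rw [← hyeq] at hout
  have hcomp := HasDerivAt.comp x hout hin
  refine ⟨_, hcomp, ?_⟩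
  rw [hyeq]
  have hdm1 : d - 1 = e + 1 := by omega
  set E : ℝ := ((d:ℝ)^2 * (1-c) * u^(e+1) * (1+y)^(e+1)) / ((1+2*x)^2 * (1+2*y)^(e+3))
    with hE
  have hbxne : (1+2*x) ≠ 0 := ne_of_gt hbx
  have hbyne : (1+2*y) ≠ 0 := ne_of_gt hby
  have habs : ((d : ℝ) * ((1+1*y)/(1+2*y)) ^ (d-1) * ((1-2)/(1+2*y)^2)) *
      ((d : ℝ) * u ^ (d-1) * ((1+c-2)/(1+2*x)^2)) = E := by
    rw [hE, hdm1, div_pow]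
    field_simp
    ring
  rw [habs, abs_of_nonneg]
  · rw [hE, div_le_iff₀ (by positivity)]
    have h2u1 : (2*u-1)*(1+2*x) = 1 + 2*(c*x) := by
      rw [hu]; field_simp; ring
    have h1c : 1 - c ≤ ((2*u-1)*(1+2*x))^2 := by
      rw [h2u1]; nlinarith [mul_nonneg hc0 hx0]
    have hTu := hT u hu23 hu1
    rw [← hy] at hTu
    have hP0 : (0:ℝ) ≤ (d:ℝ)^2 * u^(e+1) * (1+y)^(e+1) := by positivity
    calc (d:ℝ)^2 * (1-c) * u^(e+1) * (1+y)^(e+1)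
        = (1-c) * ((d:ℝ)^2 * u^(e+1) * (1+y)^(e+1)) := by ring
      _ ≤ ((2*u-1)*(1+2*x))^2 * ((d:ℝ)^2 * u^(e+1) * (1+y)^(e+1)) :=
          mul_le_mul_of_nonneg_right h1c hP0
      _ = (1+2*x)^2 * (((e+2:ℕ):ℝ)^2*(2*u-1)^2*u^(e+1)*(1+y)^(e+1)) := by
          rw [← hd]; ring
      _ ≤ (1+2*x)^2 * (Kt*(1+2*y)^(e+3)) := by
          apply mul_le_mul_of_nonneg_left hTu (by positivity)
      _ = Kt * ((1+2*x)^2 * (1+2*y)^(e+3)) := by ring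
  · rw [hE]
    have : 0 ≤ 1 - c := by linarith
    positivity

lemma jMap_deriv_bound (e : ℕ) (Kt : ℝ) (hKt : 0 ≤ Kt)
    (hT : ∀ u : ℝ, 2/3 ≤ u → u ≤ 1 →
      ((e+2:ℕ):ℝ)^2*(2*u-1)^2*u^(e+1)*(1+u^(e+2))^(e+1) ≤ Kt*(1+2*u^(e+2))^(e+3))
    (c : ℝ) (hc0 : 0 ≤ c) (hc1 : c ≤ 1/2) (x : ℝ) (hx0 : 0 ≤ x) (hx1 : x ≤ 1) :
    ∃ D, HasDerivAt (jMap (e+2) c) D x ∧ |D| ≤ (1+c/2)^(e+1) * Kt := by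
  set d : ℕ := e + 2 with hd
  have hbx : 0 < 1 + 2*x := by linarith
  set w : ℝ := (1 + 1*x)/(1+2*x) with hw
  have hw23 : 2/3 ≤ w := by rw [hw, le_div_iff₀ hbx]; nlinarith
  have hw1 : w ≤ 1 := by rw [hw, div_le_one hbx]; nlinarith
  have hw0 : 0 < w := lt_of_lt_of_le (by norm_num) hw23
  have hzeq : fMap d 1 x = w^d := rfl
  set z : ℝ := w^d with hz
  have hz0 : 0 < z := pow_pos hw0 d
  have hz1 : z ≤ 1 := pow_le_one₀ hw0.le hw1
  have hbz : 0 < 1 + 2*z := by linarith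
  have hin : HasDerivAt (fMap d 1)
      ((d : ℝ) * w ^ (d-1) * ((1-2)/(1+2*x)^2)) x := fMap_hasDerivAt d 1 x hbx
  have hout : HasDerivAt (fMap d (1+c))
      ((d : ℝ) * ((1+(1+c)*z)/(1+2*z)) ^ (d-1) * ((1+c-2)/(1+2*z)^2)) z :=
    fMap_hasDerivAt d (1+c) z hbz
  rw [← hzeq] at hout
  have hcomp := HasDerivAt.comp x hout hin
  refine ⟨_, hcomp, ?_⟩
  rw [hzeq]
  clear_value w z
  have hdm1 : d - 1 = e + 1 := by omega
  set s : ℝ := (1+(1+c)*z)/(1+2*z) with hs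
  have hs0 : 0 < s := by
    apply div_pos _ hbz; nlinarith
  set E : ℝ := ((d:ℝ)^2 * (1-c) * s^(e+1) * w^(e+1)) / ((1+2*z)^2 * (1+2*x)^2) with hE
  have hbxne : (1+2*x) ≠ 0 := ne_of_gt hbx
  have hbzne : (1+2*z) ≠ 0 := ne_of_gt hbz
  have habs : ((d : ℝ) * s ^ (d-1) * ((1+c-2)/(1+2*z)^2)) *
      ((d : ℝ) * w ^ (d-1) * ((1-2)/(1+2*x)^2)) = E := by
    rw [hE, hdm1]
    field_simp
    ring
  rw [habs, abs_of_nonneg]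
  · rw [hE, div_le_iff₀ (by positivity)]
    have hA : s^(e+1) * (1+2*z)^(e+1) ≤ (1+c/2)^(e+1)*(1+z)^(e+1) := by
      have h1 : s * (1+2*z) = 1+(1+c)*z := by rw [hs]; field_simp
      have h2 : 1+(1+c)*z ≤ (1+c/2)*(1+z) := by nlinarith
      calc s^(e+1) * (1+2*z)^(e+1) = (s*(1+2*z))^(e+1) := by rw [mul_pow]
        _ ≤ ((1+c/2)*(1+z))^(e+1) := by
            apply pow_le_pow_left₀ (by positivity) (by rw [h1]; exact h2)
        _ = (1+c/2)^(e+1)*(1+z)^(e+1) := by rw [mul_pow]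
    have hTw := hT w hw23 hw1
    rw [← hz] at hTw
    have hC : (2*w-1)*(1+2*x) = 1 := by rw [hw]; field_simp; ring
    have hsq : (2*w-1)^2 * (1+2*x)^2 = 1 := by rw [← mul_pow, hC]; norm_num
    have hC2 : (d:ℝ)^2 * w^(e+1) * (1+z)^(e+1) ≤ Kt*(1+2*z)^(e+3)*(1+2*x)^2 := by
      have hmul := mul_le_mul_of_nonneg_right hTw (sq_nonneg (1+2*x))
      calc (d:ℝ)^2 * w^(e+1) * (1+z)^(e+1)
          = ((e+2:ℕ):ℝ)^2*(2*w-1)^2*w^(e+1)*(1+z)^(e+1) * (1+2*x)^2 := by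
            rw [← hd]
            linear_combination (-(d:ℝ)^2*w^(e+1)*(1+z)^(e+1)) * hsq
        _ ≤ Kt*(1+2*z)^(e+3)*(1+2*x)^2 := hmul
    have nn1 : (0:ℝ) ≤ (d:ℝ)^2 * w^(e+1) :=
      mul_nonneg (by positivity) (pow_nonneg hw0.le _)
    have nn2 : (0:ℝ) ≤ s^(e+1)*(1+2*z)^(e+1) :=
      mul_nonneg (pow_nonneg hs0.le _) (pow_nonneg hbz.le _)
    apply le_of_mul_le_mul_right _ (show (0:ℝ) < (1+2*z)^(e+1) by positivity)
    calc (d:ℝ)^2 * (1-c) * s^(e+1) * w^(e+1) * (1+2*z)^(e+1)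
        = (1-c) * ((d:ℝ)^2 * w^(e+1) * (s^(e+1)*(1+2*z)^(e+1))) := by ring
      _ ≤ 1 * ((d:ℝ)^2 * w^(e+1) * (s^(e+1)*(1+2*z)^(e+1))) := by
          apply mul_le_mul_of_nonneg_right (by linarith) (mul_nonneg nn1 nn2)
      _ = (d:ℝ)^2 * w^(e+1) * (s^(e+1)*(1+2*z)^(e+1)) := one_mul _
      _ ≤ (d:ℝ)^2 * w^(e+1) * ((1+c/2)^(e+1)*(1+z)^(e+1)) :=
          mul_le_mul_of_nonneg_left hA nn1
      _ = (1+c/2)^(e+1) * ((d:ℝ)^2 * w^(e+1) * (1+z)^(e+1)) := by ring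
      _ ≤ (1+c/2)^(e+1) * (Kt*(1+2*z)^(e+3)*(1+2*x)^2) := by
          apply mul_le_mul_of_nonneg_left hC2 (by positivity)
      _ = (1+c/2)^(e+1) * Kt * ((1+2*z)^2*(1+2*x)^2) * (1+2*z)^(e+1) := by ring
  · rw [hE]
    have : 0 ≤ 1 - c := by linarith
    positivity

lemma master (e : ℕ) (cd Kt : ℝ) (hcd0 : 0 < cd) (hcd : cd ≤ 1/2) (hKt0 : 0 ≤ Kt)
    (hT : ∀ u : ℝ, 2/3 ≤ u → u ≤ 1 →
      ((e+2:ℕ):ℝ)^2*(2*u-1)^2*u^(e+1)*(1+u^(e+2))^(e+1) ≤ Kt*(1+2*u^(e+2))^(e+3))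
    (hK1 : (1+cd/2)^(e+1) * Kt < 1)
    (c : ℝ) (hc0 : 0 ≤ c) (hccd : c < cd) :
    ∃ ac ∈ Set.Ioo (0 : ℝ) 1, ∃ bc ∈ Set.Ioo (0 : ℝ) 1,
      iMap (e+2) c ac = ac ∧ (∀ y ∈ Set.Ioo (0 : ℝ) 1, iMap (e+2) c y = y → y = ac) ∧
      jMap (e+2) c bc = bc ∧ (∀ y ∈ Set.Ioo (0 : ℝ) 1, jMap (e+2) c y = y → y = bc) ∧
      (∀ x ∈ Set.Icc (0 : ℝ) 1,
        DifferentiableAt ℝ (iMap (e+2) c) x ∧ |deriv (iMap (e+2) c) x| < 1 ∧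
        DifferentiableAt ℝ (jMap (e+2) c) x ∧ |deriv (jMap (e+2) c) x| < 1) ∧
      (∀ x₀ ∈ Set.Icc (0 : ℝ) 1,
        Tendsto (fun k => (iMap (e+2) c)^[k] x₀) atTop (𝓝 ac) ∧
        Tendsto (fun k => (jMap (e+2) c)^[k] x₀) atTop (𝓝 bc)) ∧
      (∀ x ∈ Set.Icc (0 : ℝ) 1,
        (x < iMap (e+2) c x ↔ x < ac) ∧ (x < jMap (e+2) c x ↔ x < bc)) := by
  have hc1 : c ≤ 1/2 := le_of_lt (lt_of_lt_of_le hccd hcd)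
  set K : ℝ := (1+cd/2)^(e+1) * Kt with hK
  have hone : (1:ℝ) ≤ (1+cd/2)^(e+1) := one_le_pow₀ (by linarith)
  have hK0 : 0 ≤ K := mul_nonneg (by linarith) hKt0
  have hKtK : Kt ≤ K := by nlinarith
  have hKc : (1+c/2)^(e+1)*Kt ≤ K := by
    have h2 : (1+c/2)^(e+1) ≤ (1+cd/2)^(e+1) :=
      pow_le_pow_left₀ (by linarith) (by linarith) _
    exact mul_le_mul_of_nonneg_right h2 hKt0
  have hmapsI : ∀ x ∈ Icc (0:ℝ) 1, iMap (e+2) c x ∈ Ioo (0:ℝ) 1 := by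
    intro x hx
    have hy0 : 0 < fMap (e+2) (1+c) x := fMap_pos _ _ _ (by linarith) hx.1
    exact ⟨fMap_pos _ _ _ (by norm_num) hy0.le,
      fMap_lt_one (e+2) (by omega) 1 _ (by norm_num) hy0 (by norm_num)⟩
  have hmapsJ : ∀ x ∈ Icc (0:ℝ) 1, jMap (e+2) c x ∈ Ioo (0:ℝ) 1 := by
    intro x hx
    have hz0 : 0 < fMap (e+2) 1 x := fMap_pos _ _ _ (by norm_num) hx.1
    exact ⟨fMap_pos _ _ _ (by linarith) hz0.le,
      fMap_lt_one (e+2) (by omega) (1+c) _ (by linarith) hz0 (by linarith)⟩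
  have hderI : ∀ x ∈ Icc (0:ℝ) 1, ∃ D, HasDerivAt (iMap (e+2) c) D x ∧ |D| ≤ K := by
    intro x hx
    obtain ⟨D, hD, hDle⟩ := iMap_deriv_bound e Kt hT c hc0 hc1 x hx.1 hx.2
    exact ⟨D, hD, hDle.trans hKtK⟩
  have hderJ : ∀ x ∈ Icc (0:ℝ) 1, ∃ D, HasDerivAt (jMap (e+2) c) D x ∧ |D| ≤ K := by
    intro x hx
    obtain ⟨D, hD, hDle⟩ := jMap_deriv_bound e Kt hKt0 hT c hc0 hc1 x hx.1 hx.2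
    exact ⟨D, hD, hDle.trans hKc⟩
  have hK1' : K < 1 := hK1
  obtain ⟨ac, hacIoo, hfixI, huniqI, htendI, hordI⟩ :=
    fixedpt_package (iMap (e+2) c) K hK0 hK1' hmapsI hderI
  obtain ⟨bc, hbcIoo, hfixJ, huniqJ, htendJ, hordJ⟩ :=
    fixedpt_package (jMap (e+2) c) K hK0 hK1' hmapsJ hderJ
  refine ⟨ac, hacIoo, bc, hbcIoo, hfixI, huniqI, hfixJ, huniqJ, ?_, ?_, ?_⟩
  · intro x hx
    obtain ⟨D, hD, hDle⟩ := hderI x hx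
    obtain ⟨D', hD', hDle'⟩ := hderJ x hx
    refine ⟨hD.differentiableAt, ?_, hD'.differentiableAt, ?_⟩
    · rw [hD.deriv]; exact lt_of_le_of_lt hDle hK1'
    · rw [hD'.deriv]; exact lt_of_le_of_lt hDle' hK1'
  · exact fun x₀ hx₀ => ⟨htendI x₀ hx₀, htendJ x₀ hx₀⟩
  · exact fun x hx => ⟨hordI x hx, hordJ x hx⟩

lemma cg_half (d : ℕ) (hd2 : 2 ≤ d) (cg : ℝ) (h0 : 0 < cg) (h1 : cg < 1)
    (hfix : ((1+cg+cg^2)/(2+cg))^d = cg) : cg < 1/2 := by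
  set ρ : ℝ := (1+cg+cg^2)/(2+cg) with hρ
  have hρ0 : 0 ≤ ρ := div_nonneg (by nlinarith) (by linarith)
  have hρ1 : ρ ≤ 1 := by rw [hρ, div_le_one (by linarith)]; nlinarith
  have h2 : cg ≤ ρ^2 := by rw [← hfix]; exact pow_le_pow_of_le_one hρ0 hρ1 hd2
  have h3 : cg * (2+cg)^2 ≤ (1+cg+cg^2)^2 := by
    calc cg*(2+cg)^2 ≤ ρ^2*(2+cg)^2 := mul_le_mul_of_nonneg_right h2 (sq_nonneg _)
      _ = (1+cg+cg^2)^2 := by rw [hρ, div_pow]; field_simp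
  by_contra hcon
  push_neg at hcon
  have hp : (0:ℝ) < cg^3+2*cg^2+cg-1 := by
    nlinarith [hcon, mul_le_mul_of_nonneg_left hcon h0.le,
      mul_le_mul_of_nonneg_left (mul_le_mul_of_nonneg_left hcon h0.le) h0.le]
  nlinarith [h3, mul_pos (sub_pos.mpr h1) hp]

lemma cg_step (d : ℕ) (cg B q : ℝ) (h0 : 0 ≤ cg) (hB1 : B ≤ 1)
    (hfix : ((1+cg+cg^2)/(2+cg))^d = cg)
    (hB : cg ≤ B) (hq : ((1+B+B^2)/(2+B))^d ≤ q) : cg ≤ q := by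
  have hmono : (1+cg+cg^2)/(2+cg) ≤ (1+B+B^2)/(2+B) := by
    rw [div_le_div_iff₀ (by linarith) (by linarith)]
    nlinarith [mul_nonneg (sub_nonneg.mpr hB) (add_nonneg h0 (h0.trans hB)),
      mul_nonneg (mul_nonneg h0 (h0.trans hB)) (sub_nonneg.mpr hB)]
  have h0ρ : 0 ≤ (1+cg+cg^2)/(2+cg) := div_nonneg (by nlinarith) (by linarith)
  calc cg = ((1+cg+cg^2)/(2+cg))^d := hfix.symm
    _ ≤ ((1+B+B^2)/(2+B))^d := pow_le_pow_left₀ h0ρ hmono d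
    _ ≤ q := hq


theorem stmt_14 (d : ℕ) (hd2 : 2 ≤ d) (hd7 : d ≤ 7)
    (cg : ℝ) (hcg : cg ∈ Set.Ioo (0 : ℝ) 1) (hcgfix : gMap d 1 cg = cg) :
    ∃ cd : ℝ, cg < cd ∧ cd ≤ 1 ∧
      ∀ c : ℝ, 0 ≤ c → c < cd →
        ∃ ac ∈ Set.Ioo (0 : ℝ) 1, ∃ bc ∈ Set.Ioo (0 : ℝ) 1,
          iMap d c ac = ac ∧ (∀ y ∈ Set.Ioo (0 : ℝ) 1, iMap d c y = y → y = ac) ∧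
          jMap d c bc = bc ∧ (∀ y ∈ Set.Ioo (0 : ℝ) 1, jMap d c y = y → y = bc) ∧
          (∀ x ∈ Set.Icc (0 : ℝ) 1,
            DifferentiableAt ℝ (iMap d c) x ∧ |deriv (iMap d c) x| < 1 ∧
            DifferentiableAt ℝ (jMap d c) x ∧ |deriv (jMap d c) x| < 1) ∧
          (∀ x₀ ∈ Set.Icc (0 : ℝ) 1,
            Tendsto (fun k => (iMap d c)^[k] x₀) atTop (𝓝 ac) ∧
            Tendsto (fun k => (jMap d c)^[k] x₀) atTop (𝓝 bc)) ∧
          (∀ x ∈ Set.Icc (0 : ℝ) 1,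
            (x < iMap d c x ↔ x < ac) ∧ (x < jMap d c x ↔ x < bc)) := by
  obtain ⟨hcg0, hcg1⟩ := hcg
  have hfix : ((1+cg+cg^2)/(2+cg))^d = cg := by
    have h := hcgfix
    simp only [gMap, one_pow, one_mul] at h
    rw [show (1:ℝ)+1+cg = 2+cg by norm_num] at h
    exact h
  have hhalf : cg < 1/2 := cg_half d hd2 cg hcg0 hcg1 hfix
  interval_cases d
  · refine ⟨1/2, hhalf, by norm_num, fun c hc0 hccd => ?_⟩
    exact master 0 (1/2) (31/100) (by norm_num) (by norm_num) (by norm_num) Tbound2 (by norm_num) c hc0 hccd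
  · have b1 : cg ≤ 343/1000 :=
      cg_step 3 cg (1/2) (343/1000) hcg0.le (by norm_num) hfix hhalf.le (by norm_num)
    have b2 : cg ≤ 243/1000 :=
      cg_step 3 cg (343/1000) (243/1000) hcg0.le (by norm_num) hfix b1 (by norm_num)
    have hlt : cg < 1/4 := lt_of_le_of_lt b2 (by norm_num)
    refine ⟨1/4, hlt, by norm_num, fun c hc0 hccd => ?_⟩
    exact master 1 (1/4) (46/100) (by norm_num) (by norm_num) (by norm_num) Tbound3 (by norm_num) c hc0 hccd
  · have b1 : cg ≤ 241/1000 :=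
      cg_step 4 cg (1/2) (241/1000) hcg0.le (by norm_num) hfix hhalf.le (by norm_num)
    have b2 : cg ≤ 113/1000 :=
      cg_step 4 cg (241/1000) (113/1000) hcg0.le (by norm_num) hfix b1 (by norm_num)
    have hlt : cg < 3/25 := lt_of_le_of_lt b2 (by norm_num)
    refine ⟨3/25, hlt, by norm_num, fun c hc0 hccd => ?_⟩
    exact master 2 (3/25) (56/100) (by norm_num) (by norm_num) (by norm_num) Tbound4 (by norm_num) c hc0 hccd
  · have b1 : cg ≤ 169/1000 :=
      cg_step 5 cg (1/2) (169/1000) hcg0.le (by norm_num) hfix hhalf.le (by norm_num)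
    have b2 : cg ≤ 13/250 :=
      cg_step 5 cg (169/1000) (13/250) hcg0.le (by norm_num) hfix b1 (by norm_num)
    have hlt : cg < 3/50 := lt_of_le_of_lt b2 (by norm_num)
    refine ⟨3/50, hlt, by norm_num, fun c hc0 hccd => ?_⟩
    exact master 3 (3/50) (66/100) (by norm_num) (by norm_num) (by norm_num) Tbound5 (by norm_num) c hc0 hccd
  · have b1 : cg ≤ 59/500 :=
      cg_step 6 cg (1/2) (59/500) hcg0.le (by norm_num) hfix hhalf.le (by norm_num)
    have b2 : cg ≤ 3/125 :=
      cg_step 6 cg (59/500) (3/125) hcg0.le (by norm_num) hfix b1 (by norm_num)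
    have hlt : cg < 3/100 := lt_of_le_of_lt b2 (by norm_num)
    refine ⟨3/100, hlt, by norm_num, fun c hc0 hccd => ?_⟩
    exact master 4 (3/100) (79/100) (by norm_num) (by norm_num) (by norm_num) Tbound6 (by norm_num) c hc0 hccd
  · have b1 : cg ≤ 83/1000 :=
      cg_step 7 cg (1/2) (83/1000) hcg0.le (by norm_num) hfix hhalf.le (by norm_num)
    have b2 : cg ≤ 11/1000 :=
      cg_step 7 cg (83/1000) (11/1000) hcg0.le (by norm_num) hfix b1 (by norm_num)
    have hlt : cg < 3/250 := lt_of_le_of_lt b2 (by norm_num)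
    refine ⟨3/250, hlt, by norm_num, fun c hc0 hccd => ?_⟩
    exact master 5 (3/250) (94/100) (by norm_num) (by norm_num) (by norm_num) Tbound7 (by norm_num) c hc0 hccd
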